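/- Let L ⊂ ℝⁿ be a full-rank lattice, let D ⊆ ℝⁿ be a bounded convex set with nonempty interior, and let β ∈ (0,1) satisfy L + βD = ℝⁿ. Then (1−β)ⁿ·vol(D)/covol(L) ≤ |L ∩ D| ≤ (1+β)ⁿ·vol(D)/covol(L). -/

import Mathlib

open MeasureTheory Set Pointwise Filter
open scoped ENNReal

noncomputable section

abbrev Euc (n : ℕ) := EuclideanSpace ℝ (Fin n)

/-- `N(L, K, x) = |L ∩ (K + x)|`. -/
def Ncount {n : ℕ} (L K : Set (Euc n)) (x : Euc n) : ℕ :=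
  (L ∩ (x +ᵥ K)).ncard

/-- Covering smoothness `η(K, L)`, where `dens` is the asymptotic density of `L`
(`dens = 1/covol(L)` for a full-rank lattice `L`). -/
def eta {n : ℕ} (K L : Set (Euc n)) (dens : ℝ) : ℝ≥0∞ :=
  ⨆ x : Euc n, ENNReal.ofReal |(Ncount L K x : ℝ) / ((volume K).toReal * dens) - 1|

/-- The full-rank lattice `g ℤⁿ` (for `g` an invertible matrix). -/
def latticeOf {n : ℕ} (g : Matrix (Fin n) (Fin n) ℝ) : Set (Euc n) :=
  {x | ∃ m : Fin n → ℤ, ∀ i, x i = g.mulVec (fun j => (m j : ℝ)) i}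

/-- Membership in `Conv_n`: bounded convex subset of `ℝⁿ` with nonempty interior. -/
def IsConvBody {n : ℕ} (K : Set (Euc n)) : Prop :=
  Convex ℝ K ∧ Bornology.IsBounded K ∧ (interior K).Nonempty

/-- The translates `ℓ + K`, `ℓ ∈ L`, are pairwise disjoint. -/
def IsPacking {n : ℕ} (L K : Set (Euc n)) : Prop :=
  L.Pairwise fun y z => Disjoint (y +ᵥ K) (z +ᵥ K)

/-- The translates of `K` by `L` cover `ℝⁿ`. -/
def IsCovering {n : ℕ} (L K : Set (Euc n)) : Prop :=
  L + K = univ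

/-- Covering radius of `L` with respect to `K`. -/
def rCov {n : ℕ} (K L : Set (Euc n)) : ℝ :=
  sInf {α : ℝ | 0 < α ∧ IsCovering L (α • K)}

/-- Packing radius of `L` with respect to `K`. -/
def rPack {n : ℕ} (K L : Set (Euc n)) : ℝ :=
  sSup {α : ℝ | 0 < α ∧ IsPacking L (α • K)}

/-- `ρ_K(L)`: ratio of covering and packing radii. -/
def rhoK {n : ℕ} (K L : Set (Euc n)) : ℝ := rCov K L / rPack K L

/-- The construction A lattice `(1/p)·π_p⁻¹(S)`. -/
def constA {n : ℕ} (p : ℕ) (S : Submodule (ZMod p) (Fin n → ZMod p)) : Set (Euc n) :=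
  {x | ∃ m : Fin n → ℤ, (fun i => (m i : ZMod p)) ∈ S ∧ ∀ i, x i = (m i : ℝ) / p}

/-- The lattice `L(S) = (1/p)·g·π_p⁻¹(S)`, for `L = g ℤⁿ`. -/
def latticeOfS {n : ℕ} (g : Matrix (Fin n) (Fin n) ℝ) (p : ℕ)
    (S : Submodule (ZMod p) (Fin n → ZMod p)) : Set (Euc n) :=
  {x | ∃ m : Fin n → ℤ, (fun i => (m i : ZMod p)) ∈ S ∧
    ∀ i, x i = g.mulVec (fun j => (m j : ℝ)) i / p}

/-- `Φ_{K,L}(ε)` for a lattice of covolume `covol`. -/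
def Phi {n : ℕ} (K L : Set (Euc n)) (covol ε : ℝ) : ℝ :=
  sSup {v : ℝ | ∃ α : ℝ, 0 < α ∧ v = (volume (α • K)).toReal / covol ∧
    ENNReal.ofReal ε < eta (α • K) L (1 / covol)}

/-- Discrete smoothness `η_{F_p}(A, S)`. -/
def etaFp {p n : ℕ} (A S : Set (Fin n → ZMod p)) : ℝ :=
  ⨆ x : Fin n → ZMod p,
    |(((x +ᵥ S) ∩ A).ncard : ℝ) / ((S.ncard : ℝ) * (A.ncard : ℝ) / (p : ℝ) ^ n) - 1|

/-- Number of `r`-dimensional subspaces of `F_pⁿ`. -/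
def GrCard (p n r : ℕ) : ℕ :=
  Nat.card {S : Submodule (ZMod p) (Fin n → ZMod p) // Module.finrank (ZMod p) S = r}

/-- lattice point count vs. volume for a body whose dilate covers. -/
theorem statement12 (n : ℕ) (g : Matrix (Fin n) (Fin n) ℝ) (hg : g.det ≠ 0)
    (D : Set (Euc n)) (hD : IsConvBody D)
    (β : ℝ) (hβ : β ∈ Set.Ioo (0 : ℝ) 1)
    (hcov : latticeOf g + β • D = univ) :
    (1 - β) ^ n * (volume D).toReal / |g.det| ≤ ((latticeOf g ∩ D).ncard : ℝ) ∧
    ((latticeOf g ∩ D).ncard : ℝ) ≤ (1 + β) ^ n * (volume D).toReal / |g.det| := by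
  classical
  obtain ⟨hβ0, hβ1⟩ := hβ
  obtain ⟨hDconv, hDbdd, hDint⟩ := hD
  have hdet : IsUnit g.det := isUnit_iff_ne_zero.mpr hg
  letI iv := g.invertibleOfIsUnitDet hdet
  let eg : (Fin n → ℝ) ≃ₗ[ℝ] (Fin n → ℝ) := g.toLinearEquiv' iv
  let el : Euc n ≃ₗ[ℝ] (Fin n → ℝ) := WithLp.linearEquiv 2 ℝ (Fin n → ℝ)
  let b : Module.Basis (Fin n) ℝ (Euc n) := (Pi.basisFun ℝ (Fin n)).map (eg ≪≫ₗ el.symm)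
  have hbj : ∀ j i, b j i = g i j := by
    intro j i
    simp [b, eg, el, Matrix.toLinearEquiv', Matrix.mulVec_single]
  have hmem : ∀ (m : Fin n → ℤ) (x : Euc n),
      (∀ i, x i = g.mulVec (fun j => (m j : ℝ)) i) ↔ x = ∑ j, m j • b j := by
    intro m x
    have key : ∀ i, (∑ j, m j • b j) i = g.mulVec (fun j => (m j : ℝ)) i := by
      intro i
      rw [WithLp.ofLp_sum, Finset.sum_apply i Finset.univ (fun j => (m j • b j).ofLp)]
      simp only [PiLp.smul_apply, hbj]
      simp [Matrix.mulVec, dotProduct, mul_comm, zsmul_eq_mul]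
    constructor
    · intro h; exact congrArg (WithLp.toLp 2) (funext fun i => (h i).trans (key i).symm)
    · intro h i; rw [h, key i]
  set Λ : Submodule ℤ (Euc n) := Submodule.span ℤ (Set.range b) with hΛ
  have hset : latticeOf g = (Λ : Set (Euc n)) := by
    ext x
    constructor
    · rintro ⟨m, hm⟩
      rw [SetLike.mem_coe, hΛ, (hmem m x).mp hm]
      exact Submodule.sum_mem _ fun j _ =>
        Submodule.smul_mem _ _ (Submodule.subset_span ⟨j, rfl⟩)
    · intro hx
      rw [SetLike.mem_coe, hΛ, Module.Basis.mem_span_iff_repr_mem ℤ b x] at hx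
      choose m hm using hx
      refine ⟨m, (hmem m x).mpr ?_⟩
      conv_lhs => rw [← b.sum_repr x]
      refine Finset.sum_congr rfl fun j _ => ?_
      rw [← hm j]
      exact (Int.cast_smul_eq_zsmul ℝ (m j) (b j)).symm ▸ rfl
  -- fundamental domain
  set F := ZSpan.fundamentalDomain b with hF
  have hfd : IsAddFundamentalDomain Λ.toAddSubgroup F volume :=
    ZSpan.isAddFundamentalDomain' b volume
  have hvolF : volume F = ENNReal.ofReal |g.det| := by
    set b₀ := (EuclideanSpace.basisFun (Fin n) ℝ).toBasis
    have hvol0 : volume (ZSpan.fundamentalDomain b₀) = 1 := by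
      rw [measure_congr (ZSpan.fundamentalDomain_ae_parallelepiped b₀ volume)]
      exact (EuclideanSpace.basisFun (Fin n) ℝ).volume_parallelepiped
    have hdet2 : b₀.det b = g.det := by
      rw [Module.Basis.det_apply]
      congr 1
      ext i j
      rw [Module.Basis.toMatrix_apply]
      simp [b₀, hbj j i]
    rw [hF, ZSpan.measure_fundamentalDomain b volume b₀, hvol0, mul_one, hdet2]
  -- countability
  have hrange : latticeOf g = Set.range (fun m : Fin n → ℤ => (∑ j, m j • b j : Euc n)) := by
    ext x
    simp only [latticeOf, mem_setOf_eq, mem_range]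
    constructor
    · rintro ⟨m, hm⟩; exact ⟨m, ((hmem m x).mp hm).symm⟩
    · rintro ⟨m, hm⟩; exact ⟨m, (hmem m x).mpr hm.symm⟩
  have hcl : (latticeOf g).Countable := by rw [hrange]; exact countable_range _
  haveI hcountG : Countable Λ.toAddSubgroup := by
    rw [hset] at hcl
    exact hcl.to_subtype
  -- finiteness
  have hDfin : (latticeOf g ∩ D).Finite := by
    rw [hset, Set.inter_comm]
    haveI : DiscreteTopology (↥(Λ : Set (Euc n))) :=
      (inferInstance : DiscreteTopology Λ)
    have hclosed : IsClosed (Λ : Set (Euc n)) :=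
      AddSubgroup.isClosed_of_discrete (H := Λ.toAddSubgroup)
    exact Metric.finite_isBounded_inter_isClosed DiscreteTopology.isDiscrete hDbdd hclosed
  set c := (latticeOf g ∩ D).ncard with hc
  -- counting helper
  have hone : ∀ (s : Set (Euc n)), s.Finite → ∑' (_ : ↥s), (1 : ℝ≥0∞) = c →
      True := fun _ _ _ => trivial
  have honecard : ∀ (s : Set (Euc n)), s.Finite → ∑' (_ : ↥s), (1 : ℝ≥0∞) = s.ncard := by
    intro s hs
    haveI := hs.fintype
    rw [tsum_fintype]
    simp only [Finset.sum_const, Finset.card_univ, nsmul_eq_mul, mul_one]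
    rw [← Nat.card_coe_set_eq, Nat.card_eq_fintype_card]
  -- the counting function
  set cnt : Set (Euc n) → Euc n → ℝ≥0∞ := fun A x =>
    ∑' ℓ : Λ.toAddSubgroup, ((ℓ : Euc n) +ᵥ (-A)).indicator (fun _ => (1 : ℝ≥0∞)) x
    with hcnt
  have memiff : ∀ (A : Set (Euc n)) (x : Euc n) (ℓ : Euc n),
      x ∈ ℓ +ᵥ (-A) ↔ ℓ ∈ x +ᵥ A := by
    intro A x ℓ
    rw [Set.mem_vadd_set_iff_neg_vadd_mem, Set.mem_vadd_set_iff_neg_vadd_mem, Set.mem_neg,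
      vadd_eq_add, vadd_eq_add]
    constructor
    · intro h; convert h using 1; abel
    · intro h; convert h using 1; abel
  have cnt_eq : ∀ (A : Set (Euc n)) (x : Euc n),
      cnt A x = ∑' (_ : {ℓ : Λ.toAddSubgroup | (ℓ : Euc n) ∈ x +ᵥ A}), (1 : ℝ≥0∞) := by
    intro A x
    calc cnt A x = ∑' ℓ : Λ.toAddSubgroup,
        Set.indicator {ℓ : Λ.toAddSubgroup | (ℓ : Euc n) ∈ x +ᵥ A} (fun _ => (1 : ℝ≥0∞)) ℓ := by
          refine tsum_congr fun ℓ => ?_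
          simp only [Set.indicator_apply, Set.mem_setOf_eq]
          by_cases h : (ℓ : Euc n) ∈ x +ᵥ A
          · rw [if_pos h, if_pos ((memiff A x ℓ).mpr h)]
          · rw [if_neg (fun hx => h ((memiff A x ℓ).mp hx)), if_neg h]
      _ = ∑' (_ : {ℓ : Λ.toAddSubgroup | (ℓ : Euc n) ∈ x +ᵥ A}), (1 : ℝ≥0∞) :=
          (tsum_subtype _ _).symm
  -- aemeasurability of indicators
  have aem : ∀ s : Set (Euc n), NullMeasurableSet s (volume : Measure (Euc n)) →
      AEMeasurable (s.indicator (fun _ => (1 : ℝ≥0∞))) volume := by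
    intro s hs
    have hm : Measurable ((toMeasurable volume s).indicator (fun _ => (1 : ℝ≥0∞))) :=
      measurable_const.indicator (measurableSet_toMeasurable volume s)
    exact hm.aemeasurable.congr (indicator_ae_eq_of_ae_eq_set hs.toMeasurable_ae_eq)
  -- tiling identity
  have tile : ∀ A : Set (Euc n), Convex ℝ A → ∫⁻ x in F, cnt A x = volume (-A) := by
    intro A hA
    have hnm : ∀ ℓ : Λ.toAddSubgroup, NullMeasurableSet ((ℓ : Euc n) +ᵥ (-A))
        (volume : Measure (Euc n)) :=
      fun ℓ => (hA.neg.vadd _).nullMeasurableSet _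
    rw [hfd.measure_eq_tsum (-A), hcnt]
    rw [MeasureTheory.lintegral_tsum (fun ℓ => (aem _ (hnm ℓ)).restrict)]
    refine tsum_congr fun ℓ => ?_
    have hr : NullMeasurableSet ((ℓ : Euc n) +ᵥ (-A)) (volume.restrict F) :=
      (hnm ℓ).mono_ac Measure.restrict_le_self.absolutelyContinuous
    rw [lintegral_indicator_const₀ hr, one_mul, Measure.restrict_apply₀ hr]
    rfl
  -- pointwise bounds
  have pt_low : ∀ x : Euc n, cnt ((1 - β) • D) x ≤ (c : ℝ≥0∞) := by
    intro x
    have hx : x ∈ latticeOf g + β • D := by rw [hcov]; trivial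
    obtain ⟨l₀, hl₀, v, hv, hlv⟩ := Set.mem_add.mp hx
    rw [cnt_eq]
    set S := {ℓ : Λ.toAddSubgroup | (ℓ : Euc n) ∈ x +ᵥ (1 - β) • D} with hS
    have hl₀Λ : l₀ ∈ Λ := by rw [← SetLike.mem_coe, ← hset]; exact hl₀
    have hmemD : ∀ ℓ : S, ((ℓ : Euc n) - l₀) ∈ latticeOf g ∩ D := by
      rintro ⟨ℓ, hℓS⟩
      obtain ⟨a, ha, hxa⟩ := hℓS
      obtain ⟨d₁, hd₁, hd₁a⟩ := ha
      obtain ⟨d₂, hd₂, hd₂v⟩ := hv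
      constructor
      · rw [hset]; exact SetLike.mem_coe.mpr (Submodule.sub_mem _ ℓ.2 hl₀Λ)
      · have hd₁a' : (1 - β) • d₁ = a := hd₁a
        have hd₂v' : β • d₂ = v := hd₂v
        have hxa' : x + a = (ℓ : Euc n) := hxa
        have hval : ((ℓ : Euc n)) - l₀ = (1 - β) • d₁ + β • d₂ := by
          rw [hd₁a', hd₂v', ← hxa', ← hlv]
          abel
        rw [hval]
        exact hDconv hd₁ hd₂ (by linarith) (le_of_lt hβ0) (by ring)
    let φ : S → ↥(latticeOf g ∩ D) := fun ℓ => ⟨(ℓ : Euc n) - l₀, hmemD ℓ⟩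
    have hφ : Function.Injective φ := by
      rintro ⟨⟨a, ha⟩, hA⟩ ⟨⟨a', ha'⟩, hA'⟩ h
      have : a - l₀ = a' - l₀ := congrArg Subtype.val h
      have : a = a' := by
        have := sub_left_inj.mp this
        exact this
      exact Subtype.ext (Subtype.ext this)
    calc ∑' (_ : S), (1 : ℝ≥0∞) ≤ ∑' (_ : ↥(latticeOf g ∩ D)), (1 : ℝ≥0∞) :=
          ENNReal.tsum_comp_le_tsum_of_injective hφ _
      _ = c := by rw [honecard _ hDfin]
  have pt_up : ∀ x : Euc n, (c : ℝ≥0∞) ≤ cnt ((1 + β) • D) x := by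
    intro x
    have hx : -x ∈ latticeOf g + β • D := by rw [hcov]; trivial
    obtain ⟨l₀, hl₀, v, hv, hlv⟩ := Set.mem_add.mp hx
    rw [cnt_eq]
    set S := {ℓ : Λ.toAddSubgroup | (ℓ : Euc n) ∈ x +ᵥ (1 + β) • D} with hS
    have hl₀Λ : l₀ ∈ Λ := by rw [← SetLike.mem_coe, ← hset]; exact hl₀
    have hmemS : ∀ y : ↥(latticeOf g ∩ D), ∃ hy : (y : Euc n) - l₀ ∈ Λ,
        (⟨(y : Euc n) - l₀, hy⟩ : Λ.toAddSubgroup) ∈ S := by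
      rintro ⟨y, hyL, hyD⟩
      have hyΛ : y ∈ Λ := by rw [← SetLike.mem_coe, ← hset]; exact hyL
      refine ⟨Submodule.sub_mem _ hyΛ hl₀Λ, ?_⟩
      rw [hS, Set.mem_setOf_eq]
      refine ⟨y + v, ?_, ?_⟩
      · rw [hDconv.add_smul zero_le_one (le_of_lt hβ0)]
        exact Set.add_mem_add ⟨y, hyD, one_smul ℝ y⟩ hv
      · show x +ᵥ (y + v) = y - l₀
        have hl : l₀ = -x - v := by rw [← hlv]; abel
        rw [vadd_eq_add, hl]
        abel
    let ψ : ↥(latticeOf g ∩ D) → S := fun y => ⟨⟨(y : Euc n) - l₀, (hmemS y).1⟩, (hmemS y).2⟩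
    have hψ : Function.Injective ψ := by
      rintro ⟨a, ha⟩ ⟨a', ha'⟩ h
      have : a - l₀ = a' - l₀ := congrArg (fun z => (Subtype.val (Subtype.val z))) h
      exact Subtype.ext (sub_left_inj.mp this)
    calc (c : ℝ≥0∞) = ∑' (_ : ↥(latticeOf g ∩ D)), (1 : ℝ≥0∞) := (honecard _ hDfin).symm
      _ ≤ ∑' (_ : S), (1 : ℝ≥0∞) := ENNReal.tsum_comp_le_tsum_of_injective hψ _
  -- volumes of the dilates
  have hvolsmul : ∀ r : ℝ, 0 < r → volume (-(r • D)) = ENNReal.ofReal (r ^ n) * volume D := by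
    intro r hr
    rw [← Set.neg_smul_set, Measure.addHaar_smul, finrank_euclideanSpace_fin]
    congr 2
    rw [abs_pow, abs_neg, abs_of_pos hr]
  -- main inequalities in ℝ≥0∞
  have h1 : ENNReal.ofReal ((1 - β) ^ n) * volume D ≤ (c : ℝ≥0∞) * ENNReal.ofReal |g.det| := by
    calc ENNReal.ofReal ((1 - β) ^ n) * volume D = volume (-((1 - β) • D)) :=
          (hvolsmul _ (by linarith)).symm
      _ = ∫⁻ x in F, cnt ((1 - β) • D) x := (tile _ (hDconv.smul _)).symm
      _ ≤ ∫⁻ _ in F, (c : ℝ≥0∞) := lintegral_mono fun x => pt_low x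
      _ = (c : ℝ≥0∞) * volume F := setLIntegral_const F _
      _ = (c : ℝ≥0∞) * ENNReal.ofReal |g.det| := by rw [hvolF]
  have h2 : (c : ℝ≥0∞) * ENNReal.ofReal |g.det| ≤ ENNReal.ofReal ((1 + β) ^ n) * volume D := by
    calc (c : ℝ≥0∞) * ENNReal.ofReal |g.det| = (c : ℝ≥0∞) * volume F := by rw [hvolF]
      _ = ∫⁻ _ in F, (c : ℝ≥0∞) := (setLIntegral_const F _).symm
      _ ≤ ∫⁻ x in F, cnt ((1 + β) • D) x := lintegral_mono fun x => pt_up x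
      _ = volume (-((1 + β) • D)) := tile _ (hDconv.smul _)
      _ = ENNReal.ofReal ((1 + β) ^ n) * volume D := hvolsmul _ (by linarith)
  -- convert to reals
  have hdetpos : 0 < |g.det| := abs_pos.mpr hg
  have hDvol : volume D ≠ ⊤ := hDbdd.measure_lt_top.ne
  constructor
  · rw [div_le_iff₀ hdetpos]
    have := ENNReal.toReal_mono (by
        exact ENNReal.mul_ne_top (ENNReal.natCast_ne_top c) ENNReal.ofReal_ne_top) h1
    rwa [ENNReal.toReal_mul, ENNReal.toReal_mul, ENNReal.toReal_ofReal (pow_nonneg (by linarith) n),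
      ENNReal.toReal_natCast, ENNReal.toReal_ofReal (abs_nonneg _)] at this
  · rw [le_div_iff₀ hdetpos]
    have := ENNReal.toReal_mono (by
        exact ENNReal.mul_ne_top ENNReal.ofReal_ne_top hDvol) h2
    rwa [ENNReal.toReal_mul, ENNReal.toReal_mul, ENNReal.toReal_ofReal (pow_nonneg (by linarith) n),
      ENNReal.toReal_natCast, ENNReal.toReal_ofReal (abs_nonneg _)] at this


end
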